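/- arXiv:2008.07926 — 3 statements merged into one kernel-verified Lean document; each statement's English description precedes it below -/
import Mathlib

section
/- Let 1 ≤ k < n, let X_1, ..., X_n be Polish spaces, and let μ be a reducible Borel probability measure on X = ∏_{i=1}^n X_i; for each subset α of size k write μ_α = (pr_α)_*μ. Then there exists a constant C_μ such that for every finite (n,k)-function F ∈ L¹(X, μ) there exists a family of functions f̂_α ∈ L¹(X_α, μ_α), indexed by subsets α of size k, with F(x) = Σ_α f̂_α(x_α) for all x ∈ X and ‖f̂_α‖_{L¹(μ_α)} ≤ C_μ · ‖F‖_{L¹(μ)} for all α. -/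
open MeasureTheory Finset
open scoped ENNReal


lemma aux_coeffs (r L : ℕ) (hL : 0 < L) (K : ℕ) : ∃ A : ℕ → ℝ, ∀ m ≤ K,
    (∑ e ∈ Finset.range L, (r.choose e : ℝ) *
      (if e ≤ m then ((r + (m - e)).choose (m - e) : ℝ) else 0) * A (m - e))
      = if m = 0 then 1 else 0 := by
  induction K with
  | zero =>
    refine ⟨fun _ => 1, ?_⟩
    intro m hm
    interval_cases m
    rw [Finset.sum_eq_single_of_mem 0 (Finset.mem_range.2 hL)]
    · simp
    · intro e _ he
      have : ¬ (e ≤ 0) := by omega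
      simp [this]
  | succ K ih =>
    obtain ⟨A, hA⟩ := ih
    set coeff : ℝ := ((r + (K+1)).choose (K+1) : ℝ) with hcoeff
    have hcpos : 0 < coeff := by
      rw [hcoeff]
      exact_mod_cast Nat.choose_pos (by omega : K + 1 ≤ r + (K+1))
    set T : ℝ := ∑ e ∈ (Finset.range L).erase 0, (r.choose e : ℝ) *
      (if e ≤ K + 1 then ((r + (K + 1 - e)).choose (K + 1 - e) : ℝ) else 0) * A (K + 1 - e) with hT
    refine ⟨Function.update A (K+1) (-T / coeff), ?_⟩
    intro m hm
    rcases Nat.lt_or_ge m (K+1) with hmK | hmK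
    · have := hA m (by omega)
      rw [← this]
      refine Finset.sum_congr rfl ?_
      intro e _
      rw [Function.update_of_ne (by omega)]
    · have hmeq : m = K + 1 := by omega
      subst hmeq
      rw [← Finset.sum_erase_add _ _ (Finset.mem_range.2 hL)]
      have h1 : ∑ e ∈ (Finset.range L).erase 0, (r.choose e : ℝ) *
          (if e ≤ K + 1 then ((r + (K + 1 - e)).choose (K + 1 - e) : ℝ) else 0) *
          (Function.update A (K+1) (-T / coeff)) (K + 1 - e) = T := by
        refine Finset.sum_congr rfl ?_
        intro e he
        have he0 : e ≠ 0 := (Finset.mem_erase.1 he).1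
        rw [Function.update_of_ne (by omega)]
      rw [h1]
      have h2 : (r.choose 0 : ℝ) *
          (if 0 ≤ K + 1 then ((r + (K + 1 - 0)).choose (K + 1 - 0) : ℝ) else 0) *
          (Function.update A (K+1) (-T / coeff)) (K + 1 - 0) = -T := by
        simp only [Nat.choose_zero_right, Nat.cast_one, one_mul, if_pos (Nat.zero_le _),
          Nat.sub_zero, Function.update_self]
        rw [← hcoeff]
        field_simp
      rw [h2]
      simp

lemma aux_card_superset {n k : ℕ} (β : Finset (Fin n)) :
    (((Finset.powersetCard k (Finset.univ : Finset (Fin n))).filter (fun α => β ⊆ α)).card : ℝ)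
      = if β.card ≤ k then ((n - β.card).choose (k - β.card) : ℝ) else 0 := by
  by_cases hβ : β.card ≤ k
  · rw [if_pos hβ]
    norm_cast
    have : ((Finset.powersetCard k (Finset.univ : Finset (Fin n))).filter (fun α => β ⊆ α)).card
        = (Finset.powersetCard (k - β.card) ((Finset.univ : Finset (Fin n)) \ β)).card := by
      refine Finset.card_bij' (fun α _ => α \ β) (fun τ _ => β ∪ τ) ?_ ?_ ?_ ?_
      · intro α hα
        rw [Finset.mem_filter, Finset.mem_powersetCard] at hα
        obtain ⟨⟨hsub, hcard⟩, hβα⟩ := hα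
        rw [Finset.mem_powersetCard]
        constructor
        · exact Finset.sdiff_subset_sdiff hsub (Finset.Subset.refl β)
        · rw [Finset.card_sdiff_of_subset hβα, hcard]
      · intro τ hτ
        rw [Finset.mem_powersetCard] at hτ
        obtain ⟨hsub, hcard⟩ := hτ
        have hdisj : Disjoint β τ := by
          refine Finset.disjoint_left.2 ?_
          intro a ha haτ
          have := hsub haτ
          rw [Finset.mem_sdiff] at this
          exact this.2 ha
        rw [Finset.mem_filter, Finset.mem_powersetCard]
        refine ⟨⟨Finset.subset_univ _, ?_⟩, Finset.subset_union_left⟩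
        rw [Finset.card_union_of_disjoint hdisj, hcard]
        omega
      · intro α hα
        rw [Finset.mem_filter] at hα
        exact Finset.union_sdiff_of_subset hα.2
      · intro τ hτ
        rw [Finset.mem_powersetCard] at hτ
        have hdisj : Disjoint β τ := by
          refine Finset.disjoint_left.2 ?_
          intro a ha haτ
          have := hτ.1 haτ
          rw [Finset.mem_sdiff] at this
          exact this.2 ha
        rw [Finset.union_sdiff_cancel_left hdisj]
    rw [this, Finset.card_powersetCard, Finset.card_sdiff_of_subset (Finset.subset_univ β),
      Finset.card_univ, Fintype.card_fin]
  · rw [if_neg hβ]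
    norm_cast
    rw [Finset.card_eq_zero]
    rw [Finset.filter_eq_empty_iff]
    intro α hα
    rw [Finset.mem_powersetCard] at hα
    intro hβα
    have := Finset.card_le_card hβα
    omega


lemma aux_W {n k : ℕ} (hkn : k ≤ n) (A : ℕ → ℝ)
    (hA : ∀ m ≤ k, (∑ e ∈ Finset.range (n+1), ((n-k).choose e : ℝ) *
      (if e ≤ m then (((n-k) + (m - e)).choose (m - e) : ℝ) else 0) * A (m - e))
      = if m = 0 then 1 else 0)
    (γ δ : Finset (Fin n)) (hγ : γ.card = k) (hδ : δ ⊆ γ) :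
    (∑ β ∈ (Finset.univ : Finset (Fin n)).powerset.filter (fun β => β ∩ γ = δ),
      ((((Finset.powersetCard k (Finset.univ : Finset (Fin n))).filter
          (fun α => β ⊆ α)).card : ℝ) * A (k - β.card)))
      = if δ = γ then 1 else 0 := by
  have hd : δ.card ≤ k := hγ ▸ Finset.card_le_card hδ
  set d := δ.card with hdd
  -- Step A : reindex by ε = β \ γ
  have stepA : (∑ β ∈ (Finset.univ : Finset (Fin n)).powerset.filter (fun β => β ∩ γ = δ),
      ((((Finset.powersetCard k (Finset.univ : Finset (Fin n))).filter
          (fun α => β ⊆ α)).card : ℝ) * A (k - β.card)))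
      = ∑ ε ∈ ((Finset.univ : Finset (Fin n)) \ γ).powerset,
          (if d + ε.card ≤ k then ((n - (d + ε.card)).choose (k - (d + ε.card)) : ℝ) else 0)
            * A (k - (d + ε.card)) := by
    refine Finset.sum_nbij' (fun β => β \ γ) (fun ε => δ ∪ ε) ?_ ?_ ?_ ?_ ?_
    · intro β hβ
      rw [Finset.mem_powerset]
      exact Finset.sdiff_subset_sdiff (Finset.subset_univ β) (Finset.Subset.refl γ)
    · intro ε hε
      rw [Finset.mem_powerset] at hε
      have hdisj : Disjoint ε γ := by
        refine Finset.disjoint_left.2 ?_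
        intro a ha haγ
        exact (Finset.mem_sdiff.1 (hε ha)).2 haγ
      rw [Finset.mem_filter, Finset.mem_powerset]
      refine ⟨Finset.subset_univ _, ?_⟩
      rw [Finset.union_inter_distrib_right, Finset.inter_eq_left.2 hδ,
        Finset.disjoint_iff_inter_eq_empty.1 hdisj, Finset.union_empty]
    · intro β hβ
      rw [Finset.mem_filter] at hβ
      rw [← hβ.2]
      rw [Finset.union_comm, Finset.sdiff_union_inter]
    · intro ε hε
      rw [Finset.mem_powerset] at hε
      have hdisj : Disjoint ε γ := by
        refine Finset.disjoint_left.2 ?_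
        intro a ha haγ
        exact (Finset.mem_sdiff.1 (hε ha)).2 haγ
      rw [Finset.union_sdiff_distrib, Finset.sdiff_eq_empty_iff_subset.2 hδ,
        Finset.empty_union, Finset.sdiff_eq_self_of_disjoint hdisj]
    · intro β hβ
      rw [Finset.mem_filter, Finset.mem_powerset] at hβ
      have hcard : β.card = d + (β \ γ).card := by
        rw [hdd, ← hβ.2]
        rw [← Finset.card_inter_add_card_sdiff β γ]
      rw [aux_card_superset _, hcard]
  rw [stepA]
  -- Step B : group by cardinality
  have hcardsd : ((Finset.univ : Finset (Fin n)) \ γ).card = n - k := by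
    rw [Finset.card_sdiff_of_subset (Finset.subset_univ γ), Finset.card_univ, Fintype.card_fin, hγ]
  have stepB : (∑ ε ∈ ((Finset.univ : Finset (Fin n)) \ γ).powerset,
      (if d + ε.card ≤ k then ((n - (d + ε.card)).choose (k - (d + ε.card)) : ℝ) else 0)
        * A (k - (d + ε.card)))
      = ∑ j ∈ Finset.range (n - k + 1), ((n-k).choose j : ℝ) *
          ((if d + j ≤ k then ((n - (d + j)).choose (k - (d + j)) : ℝ) else 0) * A (k - (d + j))) := by
    rw [Finset.sum_powerset]
    rw [hcardsd]
    refine Finset.sum_congr rfl ?_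
    intro j _
    have : ∀ ε ∈ Finset.powersetCard j ((Finset.univ : Finset (Fin n)) \ γ),
        (if d + ε.card ≤ k then ((n - (d + ε.card)).choose (k - (d + ε.card)) : ℝ) else 0)
          * A (k - (d + ε.card))
        = (if d + j ≤ k then ((n - (d + j)).choose (k - (d + j)) : ℝ) else 0) * A (k - (d + j)) := by
      intro ε hε
      rw [(Finset.mem_powersetCard.1 hε).2]
    rw [Finset.sum_congr rfl this, Finset.sum_const, Finset.card_powersetCard, hcardsd,
      nsmul_eq_mul]
  rw [stepB]
  -- Step C : extend range and match with hA
  set m := k - d with hm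
  have hAm := hA m (by omega)
  have stepC : (∑ j ∈ Finset.range (n - k + 1), ((n-k).choose j : ℝ) *
      ((if d + j ≤ k then ((n - (d + j)).choose (k - (d + j)) : ℝ) else 0) * A (k - (d + j))))
      = ∑ e ∈ Finset.range (n+1), ((n-k).choose e : ℝ) *
        (if e ≤ m then (((n-k) + (m - e)).choose (m - e) : ℝ) else 0) * A (m - e) := by
    rw [Finset.sum_subset (Finset.range_subset_range.2 (by omega : n - k + 1 ≤ n + 1))]
    · refine Finset.sum_congr rfl ?_
      intro j _
      by_cases hj : d + j ≤ k
      · rw [if_pos hj, if_pos (by omega : j ≤ m)]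
        have e1 : n - (d + j) = (n - k) + (m - j) := by omega
        have e2 : k - (d + j) = m - j := by omega
        rw [e1, e2]
        ring
      · rw [if_neg hj, if_neg (by omega : ¬ j ≤ m)]
        have e2 : k - (d + j) = m - j := by omega
        rw [e2]
        ring
    · intro j hj hj2
      rw [Finset.mem_range] at hj hj2
      have : (n - k).choose j = 0 := Nat.choose_eq_zero_of_lt (by omega)
      rw [this]
      norm_num
  rw [stepC, hAm]
  have : (δ = γ) ↔ (m = 0) := by
    constructor
    · intro h; rw [hm, hdd, h, hγ]; omega
    · intro h
      exact Finset.eq_of_subset_of_card_le hδ (by omega)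
  by_cases hδγ : δ = γ
  · rw [if_pos hδγ, if_pos (this.1 hδγ)]
  · rw [if_neg hδγ, if_neg (fun h => hδγ (this.2 h))]


/-- for a reducible probability measure `μ` on a product of Polish spaces, with
marginals `μ_α = (pr_α)_*μ` for `|α| = k`, there is a constant `C_μ` such that every integrable
finite `(n,k)`-function `F ∈ L¹(μ)` can be decomposed as `F(x) = Σ_{|α|=k} f̂_α(x_α)` with each
`f̂_α ∈ L¹(μ_α)` and `‖f̂_α‖_{L¹(μ_α)} ≤ C_μ·‖F‖_{L¹(μ)}`. -/
theorem statement12 (n k : ℕ) (hk : 1 ≤ k) (hkn : k < n)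
    (X : Fin n → Type)
    [∀ i, TopologicalSpace (X i)] [∀ i, PolishSpace (X i)]
    [∀ i, MeasurableSpace (X i)] [∀ i, BorelSpace (X i)]
    (μ : Measure (∀ i, X i)) [IsProbabilityMeasure μ]
    (hred : ∃ ν : ∀ i, Measure (X i), (∀ i, IsProbabilityMeasure (ν i)) ∧
      ∃ ρ : (∀ i, X i) → ℝ≥0∞, μ = (Measure.pi ν).withDensity ρ ∧
        ∃ c C : ℝ, 0 < c ∧ ∀ x, ENNReal.ofReal c ≤ ρ x ∧ ρ x ≤ ENNReal.ofReal C) :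
    ∃ Cμ : ℝ,
      ∀ F : (∀ i, X i) → ℝ,
        Integrable F μ →
        (∃ f : (α : Finset (Fin n)) → ((i : α) → X i) → ℝ,
          ∀ x : ∀ i, X i,
            F x = ∑ α ∈ Finset.powersetCard k (Finset.univ : Finset (Fin n)),
              f α (fun i => x i)) →
        ∃ g : (α : Finset (Fin n)) → ((i : α) → X i) → ℝ,
          (∀ α ∈ Finset.powersetCard k (Finset.univ : Finset (Fin n)),
            Integrable (g α) (Measure.map (fun (x : ∀ i, X i) (i : α) => x i) μ) ∧
            ∫ y, |g α y| ∂(Measure.map (fun (x : ∀ i, X i) (i : α) => x i) μ) ≤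
              Cμ * ∫ x, |F x| ∂μ) ∧
          ∀ x : ∀ i, X i,
            F x = ∑ α ∈ Finset.powersetCard k (Finset.univ : Finset (Fin n)),
              g α (fun i => x i) := by
  classical
  obtain ⟨ν, hνP, ρ, hμρ, c, C, hc, hρ⟩ := hred
  haveI : ∀ i, IsProbabilityMeasure (ν i) := hνP
  set π : Measure (∀ i, X i) := Measure.pi ν with hπ
  haveI : IsProbabilityMeasure π := Measure.pi.instIsProbabilityMeasure ν
  -- the product space is nonempty
  have hne : Nonempty (∀ i, X i) := by
    by_contra h
    rw [not_nonempty_iff] at h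
    have h1 := measure_univ (μ := μ)
    rw [Set.univ_eq_empty_iff.2 h, measure_empty] at h1
    exact zero_ne_one h1
  obtain ⟨x₀⟩ := hne
  have hC0 : 0 < C := by
    by_contra hC
    push_neg at hC
    have h2 : ENNReal.ofReal C = 0 := ENNReal.ofReal_eq_zero.2 hC
    have h0 : ENNReal.ofReal c = 0 :=
      le_antisymm (h2 ▸ le_trans (hρ x₀).1 (hρ x₀).2) zero_le
    exact absurd h0 (ne_of_gt (ENNReal.ofReal_pos.2 hc))
  -- measure comparisons
  have hμle : μ ≤ (ENNReal.ofReal C) • π := by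
    rw [Measure.le_iff]
    intro s hs
    rw [hμρ, withDensity_apply _ hs, Measure.smul_apply, smul_eq_mul]
    calc ∫⁻ a in s, ρ a ∂π ≤ ∫⁻ _ in s, ENNReal.ofReal C ∂π :=
          setLIntegral_mono' hs (fun a _ => (hρ a).2)
      _ = ENNReal.ofReal C * π s := setLIntegral_const s _
  have hπle : π ≤ (ENNReal.ofReal c)⁻¹ • μ := by
    rw [Measure.le_iff]
    intro s hs
    have hcne : ENNReal.ofReal c ≠ 0 := ne_of_gt (ENNReal.ofReal_pos.2 hc)
    have h1 : ENNReal.ofReal c * π s ≤ μ s := by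
      rw [hμρ, withDensity_apply _ hs]
      calc ENNReal.ofReal c * π s = ∫⁻ _ in s, ENNReal.ofReal c ∂π := (setLIntegral_const s _).symm
        _ ≤ ∫⁻ a in s, ρ a ∂π := setLIntegral_mono' hs (fun a _ => (hρ a).1)
    rw [Measure.smul_apply, smul_eq_mul]
    calc π s = (ENNReal.ofReal c)⁻¹ * (ENNReal.ofReal c * π s) := by
          rw [← mul_assoc, ENNReal.inv_mul_cancel hcne ENNReal.ofReal_ne_top, one_mul]
      _ ≤ (ENNReal.ofReal c)⁻¹ * μ s := mul_le_mul_right h1 _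
  have hμac : μ ≪ π := hμρ ▸ withDensity_absolutelyContinuous π ρ
  have hπac : π ≪ μ := Measure.absolutelyContinuous_of_le_smul hπle
  -- the combinatorial coefficients
  obtain ⟨A, hA⟩ := aux_coeffs (n - k) (n + 1) (by omega) k
  set Amax : ℝ := ∑ j ∈ Finset.range (k + 1), |A j| with hAmax
  have hAmax0 : 0 ≤ Amax := Finset.sum_nonneg (fun j _ => abs_nonneg _)
  have hAle : ∀ j ≤ k, |A j| ≤ Amax := by
    intro j hj
    exact Finset.single_le_sum (fun i _ => abs_nonneg (A i)) (Finset.mem_range.2 (by omega))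
  set Breal : ℝ := C * 2 ^ (n + 1) * c⁻¹ with hBreal
  have hBreal0 : 0 ≤ Breal := by positivity
  refine ⟨(2 ^ n * Amax) * Breal, ?_⟩
  intro F hFint hFdecE
  obtain ⟨f, hFdec⟩ := hFdecE
  -- measurable representative
  obtain ⟨G, hGsm, hFG⟩ := hFint.1
  have hGmeas : Measurable G := hGsm.measurable
  obtain ⟨N, hNsub, hNmeas, hNnull⟩ :=
    exists_measurable_superset_of_null (ae_iff.1 hFG : μ {x | ¬ F x = G x} = 0)
  have hπN : π N = 0 := hπac hNnull
  -- the substitution maps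
  set S : Finset (Fin n) → (∀ i, X i) → (∀ i, X i) → (∀ i, X i) :=
    fun β z x i => if i ∈ β then x i else z i with hS
  have hSmeas : ∀ β, Measurable (fun p : (∀ i, X i) × (∀ i, X i) => S β p.1 p.2) := by
    intro β
    refine measurable_pi_lambda _ (fun i => ?_)
    by_cases hi : i ∈ β
    · simp only [hS, if_pos hi]
      exact (measurable_pi_apply i).comp measurable_snd
    · simp only [hS, if_neg hi]
      exact (measurable_pi_apply i).comp measurable_fst
  have hSmeas2 : ∀ β z, Measurable (S β z) := by
    intro β z
    refine measurable_pi_lambda _ (fun i => ?_)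
    by_cases hi : i ∈ β
    · simp only [hS, if_pos hi]
      exact measurable_pi_apply i
    · simp only [hS, if_neg hi]
      exact measurable_const
  -- the key product-measure fact
  have hmap : ∀ β, Measure.map (fun p : (∀ i, X i) × (∀ i, X i) => S β p.1 p.2) (π.prod π) = π := by
    intro β
    refine (Measure.pi_eq ?_).symm
    intro s hs
    rw [Measure.map_apply (hSmeas β) (MeasurableSet.univ_pi hs)]
    have hpre : (fun p : (∀ i, X i) × (∀ i, X i) => S β p.1 p.2) ⁻¹' (Set.univ.pi s) =
        (Set.univ.pi (fun i => if i ∈ β then Set.univ else s i)) ×ˢ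
        (Set.univ.pi (fun i => if i ∈ β then s i else Set.univ)) := by
      ext p
      simp only [Set.mem_preimage, Set.mem_pi, Set.mem_univ, forall_true_left, Set.mem_prod]
      constructor
      · intro h
        constructor
        · intro i
          by_cases hi : i ∈ β
          · simp [hi]
          · have := h i
            simp only [hS, if_neg hi] at this
            simpa [hi] using this
        · intro i
          by_cases hi : i ∈ β
          · have := h i
            simp only [hS, if_pos hi] at this
            simpa [hi] using this
          · simp [hi]
      · rintro ⟨h1, h2⟩ i
        by_cases hi : i ∈ β
        · have := h2 i
          simp only [if_pos hi] at this
          simpa [hS, hi] using this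
        · have := h1 i
          simp only [if_neg hi] at this
          simpa [hS, hi] using this
    rw [hpre, Measure.prod_prod, hπ, Measure.pi_pi, Measure.pi_pi, ← Finset.prod_mul_distrib]
    refine Finset.prod_congr rfl (fun i _ => ?_)
    by_cases hi : i ∈ β
    · simp [hi, measure_univ]
    · simp [hi, measure_univ]
  have hK1 : ∀ (β : Finset (Fin n)) (H : (∀ i, X i) → ℝ≥0∞), Measurable H →
      ∫⁻ z, ∫⁻ x, H (S β z x) ∂π ∂π = ∫⁻ w, H w ∂π := by
    intro β H hH
    conv_rhs => rw [← hmap β]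
    rw [lintegral_map hH (hSmeas β)]
    exact (lintegral_prod (fun p => H (S β p.1 p.2)) ((hH.comp (hSmeas β)).aemeasurable)).symm
  -- choose a good anchor point z
  set IG : ℝ≥0∞ := ∫⁻ x, (‖G x‖₊ : ℝ≥0∞) ∂π with hIG
  set IF : ℝ≥0∞ := ∫⁻ x, (‖F x‖₊ : ℝ≥0∞) ∂μ with hIF
  have hIFfin : IF ≠ ⊤ := ne_of_lt hFint.2
  have hGFμ : ∫⁻ x, (‖G x‖₊ : ℝ≥0∞) ∂μ = IF := by
    refine lintegral_congr_ae (hFG.mono (fun x hx => ?_))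
    simp only [hx]
  have hIGle : IG ≤ (ENNReal.ofReal c)⁻¹ * IF := by
    calc IG ≤ ∫⁻ x, (‖G x‖₊ : ℝ≥0∞) ∂((ENNReal.ofReal c)⁻¹ • μ) :=
          lintegral_mono' hπle le_rfl
      _ = (ENNReal.ofReal c)⁻¹ * ∫⁻ x, (‖G x‖₊ : ℝ≥0∞) ∂μ := lintegral_smul_measure _ _
      _ = (ENNReal.ofReal c)⁻¹ * IF := by rw [hGFμ]
  have hIGfin : IG ≠ ⊤ := by
    refine ne_of_lt (lt_of_le_of_lt hIGle ?_)
    exact ENNReal.mul_lt_top (ENNReal.inv_ne_top.2 (ne_of_gt (ENNReal.ofReal_pos.2 hc))).lt_top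
      hIFfin.lt_top
  set J : Finset (Fin n) → (∀ i, X i) → ℝ≥0∞ :=
    fun β z => ∫⁻ x, (‖G (S β z x)‖₊ : ℝ≥0∞) ∂π with hJ
  have hJmeas : ∀ β, Measurable (J β) := by
    intro β
    exact Measurable.lintegral_prod_right ((hGmeas.comp (hSmeas β)).nnnorm.coe_nnreal_ennreal)
  have hJint : ∀ β, ∫⁻ z, J β z ∂π = IG := fun β => hK1 β _ hGmeas.nnnorm.coe_nnreal_ennreal
  set Bad : Finset (Fin n) → Set (∀ i, X i) :=
    fun β => {z | 2 ^ (n + 1) * IG < J β z} with hBad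
  have hBadle : ∀ β, π (Bad β) ≤ ((2 : ℝ≥0∞) ^ (n + 1))⁻¹ := by
    intro β
    by_cases h0 : IG = 0
    · have h1 : ∫⁻ z, J β z ∂π = 0 := by rw [hJint β, h0]
      have hae := (lintegral_eq_zero_iff (hJmeas β)).1 h1
      have h2 : π {z | ¬ J β z = 0} = 0 := ae_iff.1 hae
      refine le_trans (le_trans (measure_mono ?_) (le_of_eq h2)) zero_le
      intro w hw
      simp only [hBad, Set.mem_setOf_eq, h0, mul_zero] at hw
      simp only [Set.mem_setOf_eq]
      exact ne_of_gt hw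
    · have hmark := mul_meas_ge_le_lintegral₀ (μ := π) (hJmeas β).aemeasurable (2 ^ (n + 1) * IG)
      rw [hJint β] at hmark
      have hsub : Bad β ⊆ {z | 2 ^ (n + 1) * IG ≤ J β z} := by
        intro w hw
        simp only [hBad, Set.mem_setOf_eq] at hw
        exact le_of_lt hw
      have h3 : 2 ^ (n + 1) * IG * π (Bad β) ≤ IG :=
        le_trans (mul_le_mul_right (measure_mono hsub) _) hmark
      have hne2 : (2 : ℝ≥0∞) ^ (n + 1) * IG ≠ 0 := by
        simp [h0]
      have hnetop : (2 : ℝ≥0∞) ^ (n + 1) * IG ≠ ⊤ := by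
        exact ENNReal.mul_ne_top (by simp) hIGfin
      calc π (Bad β) = (2 ^ (n + 1) * IG)⁻¹ * (2 ^ (n + 1) * IG * π (Bad β)) := by
            rw [← mul_assoc, ENNReal.inv_mul_cancel hne2 hnetop, one_mul]
        _ ≤ (2 ^ (n + 1) * IG)⁻¹ * IG := mul_le_mul_right h3 _
        _ = ((2 : ℝ≥0∞) ^ (n + 1))⁻¹ * (IG⁻¹ * IG) := by
            rw [ENNReal.mul_inv (Or.inl (by simp)) (Or.inl (by simp)), mul_assoc]
        _ ≤ ((2 : ℝ≥0∞) ^ (n + 1))⁻¹ := by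
            rw [ENNReal.inv_mul_cancel h0 hIGfin, mul_one]
  -- null events for the representative
  set Ebad : Finset (Fin n) → Set (∀ i, X i) :=
    fun β => {z | π {x | S β z x ∈ N} ≠ 0} with hEbad
  have hEnull : ∀ β, π (Ebad β) = 0 := by
    intro β
    have hind : ∀ z, π {x | S β z x ∈ N} = ∫⁻ x, N.indicator 1 (S β z x) ∂π := by
      intro w
      have : (fun x => N.indicator (1 : (∀ i, X i) → ℝ≥0∞) (S β w x)) =
          fun x => (S β w ⁻¹' N).indicator 1 x := by
        funext x
        simp [Set.indicator_apply, Set.mem_preimage]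
      rw [this, lintegral_indicator_one ((hSmeas2 β w) hNmeas)]
      rfl
    have h1 : ∫⁻ z, π {x | S β z x ∈ N} ∂π = 0 := by
      rw [lintegral_congr hind, hK1 β (N.indicator 1) (measurable_one.indicator hNmeas),
        lintegral_indicator_one hNmeas, hπN]
    have hm : Measurable (fun z => π {x | S β z x ∈ N}) := by
      have : (fun z => π {x | S β z x ∈ N}) =
          fun z => ∫⁻ x, N.indicator 1 (S β z x) ∂π := funext hind
      rw [this]
      exact Measurable.lintegral_prod_right
        ((measurable_one.indicator hNmeas).comp (hSmeas β))
    have hae := (lintegral_eq_zero_iff hm).1 h1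
    exact ae_iff.1 hae
  -- pick z
  have hbig : π ((⋃ β ∈ (Finset.univ : Finset (Fin n)).powerset, Bad β) ∪
      (⋃ β ∈ (Finset.univ : Finset (Fin n)).powerset, Ebad β)) < 1 := by
    have hb1 : π (⋃ β ∈ (Finset.univ : Finset (Fin n)).powerset, Bad β) ≤ 2⁻¹ := by
      calc π (⋃ β ∈ (Finset.univ : Finset (Fin n)).powerset, Bad β)
          ≤ ∑ β ∈ (Finset.univ : Finset (Fin n)).powerset, π (Bad β) :=
            measure_biUnion_finset_le _ _
        _ ≤ ∑ _β ∈ (Finset.univ : Finset (Fin n)).powerset, ((2 : ℝ≥0∞) ^ (n + 1))⁻¹ :=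
            Finset.sum_le_sum (fun β _ => hBadle β)
        _ = (2 ^ n : ℕ) * ((2 : ℝ≥0∞) ^ (n + 1))⁻¹ := by
            rw [Finset.sum_const, Finset.card_powerset, Finset.card_univ, Fintype.card_fin,
              nsmul_eq_mul]
        _ = 2⁻¹ := by
            rw [Nat.cast_pow, Nat.cast_ofNat, pow_succ, ENNReal.mul_inv (Or.inl (by simp))
              (Or.inl (by simp)), ← mul_assoc, ENNReal.mul_inv_cancel (by simp) (by simp),
              one_mul]
    have hb2 : π (⋃ β ∈ (Finset.univ : Finset (Fin n)).powerset, Ebad β) = 0 := by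
      refine le_antisymm ?_ zero_le
      calc π (⋃ β ∈ (Finset.univ : Finset (Fin n)).powerset, Ebad β)
          ≤ ∑ β ∈ (Finset.univ : Finset (Fin n)).powerset, π (Ebad β) :=
            measure_biUnion_finset_le _ _
        _ = 0 := by
            rw [Finset.sum_eq_zero (fun β _ => hEnull β)]
    refine lt_of_le_of_lt (measure_union_le _ _) ?_
    refine lt_of_le_of_lt (add_le_add hb1 (le_of_eq hb2)) ?_
    norm_num
  have hzex : ∃ z, z ∉ ((⋃ β ∈ (Finset.univ : Finset (Fin n)).powerset, Bad β) ∪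
      (⋃ β ∈ (Finset.univ : Finset (Fin n)).powerset, Ebad β)) := by
    by_contra h
    push_neg at h
    have hsub2 : (Set.univ : Set (∀ i, X i)) ⊆ ((⋃ β ∈ (Finset.univ : Finset (Fin n)).powerset, Bad β) ∪
        (⋃ β ∈ (Finset.univ : Finset (Fin n)).powerset, Ebad β)) := fun w _ => h w
    have h2 := measure_mono (μ := π) hsub2
    rw [measure_univ] at h2
    exact absurd (lt_of_le_of_lt h2 hbig) (lt_irrefl _)
  obtain ⟨z, hz⟩ := hzex
  have hzgood1 : ∀ β : Finset (Fin n), J β z ≤ 2 ^ (n + 1) * IG := by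
    intro β
    by_contra h
    push_neg at h
    exact hz (Set.mem_union_left _ (Set.mem_biUnion (Finset.mem_powerset.2 (Finset.subset_univ β)) h))
  have hzgood2 : ∀ β : Finset (Fin n), π {x | S β z x ∈ N} = 0 := by
    intro β
    by_contra h
    exact hz (Set.mem_union_right _ (Set.mem_biUnion (Finset.mem_powerset.2 (Finset.subset_univ β)) h))
  -- define the decomposition
  set ext : (α : Finset (Fin n)) → ((i : α) → X i) → (∀ i, X i) :=
    fun α y i => if h : i ∈ α then y ⟨i, h⟩ else z i with hextdef
  set g : (α : Finset (Fin n)) → ((i : α) → X i) → ℝ :=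
    fun α y => ∑ β ∈ α.powerset, A (k - β.card) * F (S β z (ext α y)) with hgdef
  have hclaim0 : ∀ (α β : Finset (Fin n)), β ⊆ α → ∀ x : ∀ i, X i,
      S β z (ext α (fun i : α => x i)) = S β z x := by
    intro α β hβα x
    funext i
    by_cases hi : i ∈ β
    · simp only [hS, if_pos hi, hextdef, dif_pos (hβα hi)]
    · simp only [hS, if_neg hi]
  refine ⟨g, ?_, ?_⟩
  · -- integrability and norm bounds
    intro α hα
    have hprmeas : Measurable (fun (x : ∀ i, X i) (i : α) => x i) :=
      measurable_pi_lambda _ (fun i => measurable_pi_apply _)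
    set μα := Measure.map (fun (x : ∀ i, X i) (i : α) => x i) μ with hμα
    set να := Measure.map (fun (x : ∀ i, X i) (i : α) => x i) π with hνα
    have hextmeas : Measurable (ext α) := by
      refine measurable_pi_lambda _ (fun i => ?_)
      by_cases h : i ∈ α
      · simp only [hextdef, dif_pos h]
        exact measurable_pi_apply _
      · simp only [hextdef, dif_neg h]
        exact measurable_const
    have key : ∀ β ∈ α.powerset,
        Integrable (fun y => F (S β z (ext α y))) μα ∧
        ∫ y, |F (S β z (ext α y))| ∂μα ≤ Breal * ∫ x, |F x| ∂μ := by
      intro β hβ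
      have hβα := Finset.mem_powerset.1 hβ
      have hcomp : ∀ x : ∀ i, X i, S β z (ext α (fun i : α => x i)) = S β z x := hclaim0 α β hβα
      have hh2meas : Measurable (fun y => G (S β z (ext α y))) :=
        hGmeas.comp ((hSmeas2 β z).comp hextmeas)
      have hEβ : να ((fun y => S β z (ext α y)) ⁻¹' N) = 0 := by
        have hms : MeasurableSet ((fun y => S β z (ext α y)) ⁻¹' N) :=
          ((hSmeas2 β z).comp hextmeas) hNmeas
        rw [hνα, Measure.map_apply hprmeas hms]
        have hpre2 : (fun (x : ∀ i, X i) (i : α) => x i) ⁻¹' ((fun y => S β z (ext α y)) ⁻¹' N)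
            = {x | S β z x ∈ N} := by
          ext x
          simp only [Set.mem_preimage, Set.mem_setOf_eq]
          rw [hcomp x]
        rw [hpre2]
        exact hzgood2 β
      have haeβ : (fun y => F (S β z (ext α y))) =ᵐ[να] (fun y => G (S β z (ext α y))) := by
        refine ae_iff.2 (measure_mono_null ?_ hEβ)
        intro y hy
        simp only [Set.mem_setOf_eq] at hy
        exact hNsub hy
      have haesm_να : AEStronglyMeasurable (fun y => F (S β z (ext α y))) να :=
        hh2meas.aestronglyMeasurable.congr haeβ.symm
      have hacα : μα ≪ να := Measure.AbsolutelyContinuous.map hμac hprmeas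
      have haesm_μα : AEStronglyMeasurable (fun y => F (S β z (ext α y))) μα :=
        haesm_να.mono_ac hacα
      have hμαle : μα ≤ (ENNReal.ofReal C) • να := by
        rw [hμα, hνα, ← Measure.map_smul]
        exact Measure.map_mono hμle hprmeas
      have hlin : ∫⁻ y, (‖F (S β z (ext α y))‖₊ : ℝ≥0∞) ∂μα ≤
          ENNReal.ofReal C * (2 ^ (n + 1) * ((ENNReal.ofReal c)⁻¹ * IF)) := by
        calc ∫⁻ y, (‖F (S β z (ext α y))‖₊ : ℝ≥0∞) ∂μα
            ≤ ∫⁻ y, (‖F (S β z (ext α y))‖₊ : ℝ≥0∞) ∂((ENNReal.ofReal C) • να) :=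
              lintegral_mono' hμαle le_rfl
          _ = ENNReal.ofReal C * ∫⁻ y, (‖F (S β z (ext α y))‖₊ : ℝ≥0∞) ∂να :=
              lintegral_smul_measure _ _
          _ = ENNReal.ofReal C * ∫⁻ y, (‖G (S β z (ext α y))‖₊ : ℝ≥0∞) ∂να := by
              rw [lintegral_congr_ae (haeβ.mono (fun y hy => by
                rw [show F (S β z (ext α y)) = G (S β z (ext α y)) from hy]))]
          _ = ENNReal.ofReal C *
              ∫⁻ x, (‖G (S β z (ext α (fun i : α => x i)))‖₊ : ℝ≥0∞) ∂π := by
              rw [hνα, lintegral_map' hh2meas.nnnorm.coe_nnreal_ennreal.aemeasurable hprmeas.aemeasurable]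
          _ = ENNReal.ofReal C * J β z := by
              congr 1
              refine lintegral_congr (fun x => ?_)
              rw [hcomp x]
          _ ≤ ENNReal.ofReal C * (2 ^ (n + 1) * IG) := mul_le_mul_right (hzgood1 β) _
          _ ≤ _ := mul_le_mul_right (mul_le_mul_right hIGle _) _
      have hfin' : (ENNReal.ofReal C * (2 ^ (n + 1) * ((ENNReal.ofReal c)⁻¹ * IF))) ≠ ⊤ :=
        ENNReal.mul_ne_top ENNReal.ofReal_ne_top (ENNReal.mul_ne_top (by simp)
          (ENNReal.mul_ne_top (ENNReal.inv_ne_top.2 (ne_of_gt (ENNReal.ofReal_pos.2 hc))) hIFfin))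
      have hint : Integrable (fun y => F (S β z (ext α y))) μα :=
        ⟨haesm_μα, lt_of_le_of_lt hlin hfin'.lt_top⟩
      refine ⟨hint, ?_⟩
      have hr1 : ∫ y, |F (S β z (ext α y))| ∂μα
          = (∫⁻ y, (‖F (S β z (ext α y))‖₊ : ℝ≥0∞) ∂μα).toReal := by
        simp only [← enorm_eq_nnnorm]
        rw [← integral_norm_eq_lintegral_enorm haesm_μα]
        simp only [Real.norm_eq_abs]
      have hr2 : ∫ x, |F x| ∂μ = IF.toReal := by
        rw [hIF]
        simp only [← enorm_eq_nnnorm]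
        rw [← integral_norm_eq_lintegral_enorm hFint.1]
        simp only [Real.norm_eq_abs]
      rw [hr1, hr2]
      refine le_trans (ENNReal.toReal_mono hfin' hlin) (le_of_eq ?_)
      rw [ENNReal.toReal_mul, ENNReal.toReal_mul, ENNReal.toReal_mul,
        ENNReal.toReal_ofReal hC0.le, ENNReal.toReal_inv, ENNReal.toReal_ofReal hc.le, hBreal]
      have h2r : ((2 : ℝ≥0∞) ^ (n + 1)).toReal = 2 ^ (n + 1) := by
        rw [ENNReal.toReal_pow]
        norm_num
      rw [h2r]
      ring
    have hgint : Integrable (g α) μα := by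
      have := integrable_finset_sum (μ := μα) α.powerset
        (f := fun β y => A (k - β.card) * F (S β z (ext α y)))
        (fun β hβ => ((key β hβ).1).const_mul _)
      exact this
    refine ⟨hgint, ?_⟩
    have hmaj : Integrable (fun y => ∑ β ∈ α.powerset,
        |A (k - β.card)| * |F (S β z (ext α y))|) μα :=
      integrable_finset_sum _ (fun β hβ => ((key β hβ).1).abs.const_mul _)
    have hFnn : (0 : ℝ) ≤ ∫ x, |F x| ∂μ := integral_nonneg (fun x => abs_nonneg _)
    calc ∫ y, |g α y| ∂μα
        ≤ ∫ y, ∑ β ∈ α.powerset, |A (k - β.card)| * |F (S β z (ext α y))| ∂μα := by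
          refine integral_mono hgint.abs hmaj (fun y => ?_)
          simp only [hgdef]
          refine le_trans (Finset.abs_sum_le_sum_abs _ _) (le_of_eq ?_)
          exact Finset.sum_congr rfl (fun β _ => abs_mul _ _)
      _ = ∑ β ∈ α.powerset, |A (k - β.card)| * ∫ y, |F (S β z (ext α y))| ∂μα := by
          rw [integral_finset_sum _ (fun β hβ => ((key β hβ).1).abs.const_mul _)]
          exact Finset.sum_congr rfl (fun β _ => integral_const_mul _ _)
      _ ≤ ∑ _β ∈ α.powerset, Amax * (Breal * ∫ x, |F x| ∂μ) := by
          refine Finset.sum_le_sum (fun β hβ => ?_)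
          have h1 := (key β hβ).2
          have h2 : |A (k - β.card)| ≤ Amax := hAle _ (by omega)
          have h3 : 0 ≤ ∫ y, |F (S β z (ext α y))| ∂μα :=
            integral_nonneg (fun y => abs_nonneg _)
          calc |A (k - β.card)| * ∫ y, |F (S β z (ext α y))| ∂μα
              ≤ Amax * ∫ y, |F (S β z (ext α y))| ∂μα := mul_le_mul_of_nonneg_right h2 h3
            _ ≤ Amax * (Breal * ∫ x, |F x| ∂μ) := mul_le_mul_of_nonneg_left h1 hAmax0
      _ ≤ (2 ^ n * Amax) * Breal * ∫ x, |F x| ∂μ := by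
          rw [Finset.sum_const, nsmul_eq_mul, Finset.card_powerset]
          have hcard : ((2 ^ α.card : ℕ) : ℝ) ≤ 2 ^ n := by
            have hle : α.card ≤ n := by
              have := Finset.card_le_card (Finset.subset_univ α)
              rwa [Finset.card_univ, Fintype.card_fin] at this
            push_cast
            exact pow_le_pow_right₀ (by norm_num) hle
          have hnn : 0 ≤ Amax * (Breal * ∫ x, |F x| ∂μ) :=
            mul_nonneg hAmax0 (mul_nonneg hBreal0 hFnn)
          nlinarith [mul_le_mul_of_nonneg_right hcard hnn]
  · -- the pointwise identity
    intro x
    have h1 : ∀ α ∈ Finset.powersetCard k (Finset.univ : Finset (Fin n)),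
        g α (fun i => x i) = ∑ β ∈ α.powerset, A (k - β.card) * F (S β z x) := by
      intro α _
      simp only [hgdef]
      exact Finset.sum_congr rfl (fun β hβ => by rw [hclaim0 α β (Finset.mem_powerset.1 hβ) x])
    rw [Finset.sum_congr rfl h1]
    have h2 : ∀ β : Finset (Fin n), F (S β z x) =
        ∑ γ ∈ Finset.powersetCard k (Finset.univ : Finset (Fin n)),
          f γ (fun i : γ => S (β ∩ γ) z x i) := by
      intro β
      rw [hFdec (S β z x)]
      refine Finset.sum_congr rfl (fun γ _ => ?_)
      congr 1
      funext i
      have hiγ : (i : Fin n) ∈ γ := i.2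
      simp only [hS]
      by_cases hi : (i : Fin n) ∈ β
      · rw [if_pos hi, if_pos (Finset.mem_inter.2 ⟨hi, hiγ⟩)]
      · rw [if_neg hi, if_neg (fun hc2 => hi (Finset.mem_inter.1 hc2).1)]
    have h3 : ∑ α ∈ Finset.powersetCard k (Finset.univ : Finset (Fin n)),
        ∑ β ∈ α.powerset, A (k - β.card) * F (S β z x)
        = ∑ γ ∈ Finset.powersetCard k (Finset.univ : Finset (Fin n)),
            ∑ α ∈ Finset.powersetCard k (Finset.univ : Finset (Fin n)),
              ∑ β ∈ α.powerset, A (k - β.card) * f γ (fun i : γ => S (β ∩ γ) z x i) := by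
      rw [Finset.sum_comm]
      refine Finset.sum_congr rfl (fun α _ => ?_)
      rw [Finset.sum_comm]
      refine Finset.sum_congr rfl (fun β _ => ?_)
      rw [h2 β, Finset.mul_sum]
    rw [h3]
    have h4 : ∀ γ ∈ Finset.powersetCard k (Finset.univ : Finset (Fin n)),
        ∑ α ∈ Finset.powersetCard k (Finset.univ : Finset (Fin n)),
          ∑ β ∈ α.powerset, A (k - β.card) * f γ (fun i : γ => S (β ∩ γ) z x i)
        = f γ (fun i : γ => x i) := by
      intro γ hγ
      have hγcard : γ.card = k := (Finset.mem_powersetCard.1 hγ).2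
      -- swap to β-major order
      have e1 : ∀ α ∈ Finset.powersetCard k (Finset.univ : Finset (Fin n)),
          ∑ β ∈ α.powerset, A (k - β.card) * f γ (fun i : γ => S (β ∩ γ) z x i)
          = ∑ β ∈ (Finset.univ : Finset (Fin n)).powerset,
              if β ⊆ α then A (k - β.card) * f γ (fun i : γ => S (β ∩ γ) z x i) else 0 := by
        intro α _
        rw [← Finset.sum_filter]
        congr 1
        ext β
        simp only [Finset.mem_filter, Finset.mem_powerset]
        exact ⟨fun h => ⟨Finset.subset_univ β, h⟩, fun h => h.2⟩
      rw [Finset.sum_congr rfl e1, Finset.sum_comm]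
      have e2 : ∀ β ∈ (Finset.univ : Finset (Fin n)).powerset,
          (∑ α ∈ Finset.powersetCard k (Finset.univ : Finset (Fin n)),
            if β ⊆ α then A (k - β.card) * f γ (fun i : γ => S (β ∩ γ) z x i) else 0)
          = (((Finset.powersetCard k (Finset.univ : Finset (Fin n))).filter
              (fun α => β ⊆ α)).card : ℝ) * A (k - β.card) * f γ (fun i : γ => S (β ∩ γ) z x i) := by
        intro β _
        rw [← Finset.sum_filter, Finset.sum_const, nsmul_eq_mul, mul_assoc]
      rw [Finset.sum_congr rfl e2]
      -- fiberwise over δ = β ∩ γ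
      rw [← Finset.sum_fiberwise_of_maps_to (g := fun β => β ∩ γ) (t := γ.powerset)
        (fun β _ => Finset.mem_powerset.2 Finset.inter_subset_right)]
      have e3 : ∀ δ ∈ γ.powerset,
          ∑ β ∈ (Finset.univ : Finset (Fin n)).powerset.filter (fun β => β ∩ γ = δ),
            (((Finset.powersetCard k (Finset.univ : Finset (Fin n))).filter
              (fun α => β ⊆ α)).card : ℝ) * A (k - β.card) * f γ (fun i : γ => S (β ∩ γ) z x i)
          = (if δ = γ then (1 : ℝ) else 0) * f γ (fun i : γ => S δ z x i) := by
        intro δ hδ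
        have : ∀ β ∈ (Finset.univ : Finset (Fin n)).powerset.filter (fun β => β ∩ γ = δ),
            (((Finset.powersetCard k (Finset.univ : Finset (Fin n))).filter
              (fun α => β ⊆ α)).card : ℝ) * A (k - β.card) * f γ (fun i : γ => S (β ∩ γ) z x i)
            = (((Finset.powersetCard k (Finset.univ : Finset (Fin n))).filter
              (fun α => β ⊆ α)).card : ℝ) * A (k - β.card) * f γ (fun i : γ => S δ z x i) := by
          intro β hβ
          rw [(Finset.mem_filter.1 hβ).2]
        rw [Finset.sum_congr rfl this, ← Finset.sum_mul,
          aux_W (le_of_lt hkn) A hA γ δ hγcard (Finset.mem_powerset.1 hδ)]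
      rw [Finset.sum_congr rfl e3]
      have e4 : ∀ δ ∈ γ.powerset, (if δ = γ then (1 : ℝ) else 0) * f γ (fun i : γ => S δ z x i)
          = if δ = γ then f γ (fun i : γ => S δ z x i) else 0 := by
        intro δ _
        by_cases h : δ = γ <;> simp [h]
      rw [Finset.sum_congr rfl e4, Finset.sum_ite_eq' γ.powerset γ
        (fun δ => f γ (fun i : γ => S δ z x i)), if_pos (Finset.mem_powerset.2 (Finset.Subset.refl γ))]
      congr 1
      funext i
      simp only [hS, if_pos i.2]
    rw [Finset.sum_congr rfl h4, ← hFdec x]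
end

section
/- Let X_1, ..., X_n be Polish spaces and let {μ_α}, indexed by subsets α ⊆ {1,...,n} of size k, be Borel probability measures on the spaces X_α. Let A ⊆ X = ∏_{i=1}^n X_i be a measurable set whose proper (n,k)-thickness sth(A) equals 0. Then the infimum defining sth(A) is attained: there exist measurable subsets Y_α ⊆ X_α with μ_α(Y_α) = 0 for every α of size k and A ⊆ ∪_α pr_α^{-1}(Y_α). -/
open MeasureTheory
open scoped ENNReal

/-- if a measurable set `A` in a product of Polish spaces has proper
`(n,k)`-thickness zero, the infimum defining the thickness is attained: there are measurable
null sets `Y_α ⊆ X_α` (for all `α` of cardinality `k`) with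
`A ⊆ ⋃_α pr_α⁻¹(Y_α)`. -/
theorem statement13 (n k : ℕ) (X : Fin n → Type)
    [∀ i, TopologicalSpace (X i)] [∀ i, PolishSpace (X i)]
    [∀ i, MeasurableSpace (X i)] [∀ i, BorelSpace (X i)]
    (μ : (α : Finset (Fin n)) → Measure ((i : α) → X i))
    (hprob : ∀ α : Finset (Fin n), α.card = k → IsProbabilityMeasure (μ α))
    (A : Set (∀ i, X i)) (hA : MeasurableSet A)
    (hsth : sInf {r : ℝ≥0∞ | ∃ Y : (α : Finset (Fin n)) → Set ((i : α) → X i),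
        (∀ α ∈ Finset.powersetCard k (Finset.univ : Finset (Fin n)),
          MeasurableSet (Y α)) ∧
        A ⊆ (⋃ α ∈ Finset.powersetCard k (Finset.univ : Finset (Fin n)),
          (fun (x : ∀ i, X i) (i : α) => x i) ⁻¹' Y α) ∧
        r = ∑ α ∈ Finset.powersetCard k (Finset.univ : Finset (Fin n)),
          μ α (Y α)} = 0) :
    ∃ Y : (α : Finset (Fin n)) → Set ((i : α) → X i),
      (∀ α ∈ Finset.powersetCard k (Finset.univ : Finset (Fin n)),
        MeasurableSet (Y α) ∧ μ α (Y α) = 0) ∧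
      A ⊆ ⋃ α ∈ Finset.powersetCard k (Finset.univ : Finset (Fin n)),
        (fun (x : ∀ i, X i) (i : α) => x i) ⁻¹' Y α := by
  classical
  set P := Finset.powersetCard k (Finset.univ : Finset (Fin n)) with hP
  have key : ∀ m : ℕ, ∃ Y : (α : Finset (Fin n)) → Set ((i : α) → X i),
      (∀ α ∈ P, MeasurableSet (Y α)) ∧
      A ⊆ (⋃ α ∈ P, (fun (x : ∀ i, X i) (i : α) => x i) ⁻¹' Y α) ∧
      (∑ α ∈ P, μ α (Y α)) < (2⁻¹ : ℝ≥0∞) ^ m := by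
    intro m
    have hpos : (0 : ℝ≥0∞) < (2⁻¹ : ℝ≥0∞) ^ m := by
      apply ENNReal.pow_pos; norm_num
    have hlt := hsth ▸ hpos
    obtain ⟨r, ⟨Y, hm1, hm2, hm3⟩, hrlt⟩ := sInf_lt_iff.mp hlt
    exact ⟨Y, hm1, hm2, hm3 ▸ hrlt⟩
  choose Ys hmeas hcov hsum using key
  refine ⟨fun α => ⋂ N : ℕ, ⋃ m : ℕ, Ys (N + m) α, ?_, ?_⟩
  · intro α hα
    refine ⟨MeasurableSet.iInter fun N => MeasurableSet.iUnion fun m => hmeas _ α hα, ?_⟩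
    have hbound : ∀ N : ℕ, μ α (⋂ N : ℕ, ⋃ m : ℕ, Ys (N + m) α) ≤ (2⁻¹ : ℝ≥0∞) ^ N * 2 := by
      intro N
      calc μ α (⋂ N : ℕ, ⋃ m : ℕ, Ys (N + m) α)
          ≤ μ α (⋃ m : ℕ, Ys (N + m) α) := measure_mono (Set.iInter_subset _ N)
        _ ≤ ∑' m : ℕ, μ α (Ys (N + m) α) := measure_iUnion_le _
        _ ≤ ∑' m : ℕ, (2⁻¹ : ℝ≥0∞) ^ (N + m) := by
            refine ENNReal.tsum_le_tsum fun m => le_of_lt (lt_of_le_of_lt ?_ (hsum (N + m)))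
            exact Finset.single_le_sum (f := fun β => μ β (Ys (N + m) β))
              (fun _ _ => zero_le) hα
        _ = (2⁻¹ : ℝ≥0∞) ^ N * ∑' m : ℕ, (2⁻¹ : ℝ≥0∞) ^ m := by
            simp [pow_add, ENNReal.tsum_mul_left]
        _ = (2⁻¹ : ℝ≥0∞) ^ N * 2 := by
            rw [ENNReal.tsum_geometric, ENNReal.one_sub_inv_two, inv_inv]
    have htend : Filter.Tendsto (fun N : ℕ => (2⁻¹ : ℝ≥0∞) ^ N * 2) Filter.atTop (nhds 0) := by
      have h1 := ENNReal.tendsto_pow_atTop_nhds_zero_of_lt_one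
        (by norm_num : (2⁻¹ : ℝ≥0∞) < 1)
      simpa using ENNReal.Tendsto.mul_const h1 (Or.inr (by norm_num))
    exact le_antisymm (ge_of_tendsto' htend hbound) zero_le
  · intro x hx
    have hαm : ∀ m : ℕ, ∃ α, α ∈ P ∧ (fun i : α => x i) ∈ Ys m α := by
      intro m
      have h := hcov m hx
      simpa using h
    choose f hfP hfmem using hαm
    obtain ⟨α, hαinf⟩ := Finite.exists_infinite_fiber f
    have hinf : (f ⁻¹' {α}).Infinite := Set.infinite_coe_iff.mp hαinf
    obtain ⟨m0, hm0⟩ := hinf.nonempty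
    have hm0' : f m0 = α := hm0
    have hαP : α ∈ P := hm0' ▸ hfP m0
    refine Set.mem_iUnion₂.mpr ⟨α, hαP, ?_⟩
    refine Set.mem_iInter.mpr fun N => ?_
    obtain ⟨b, hbfib, hNb⟩ := hinf.exists_gt N
    have hfb : f b = α := hbfib
    subst hfb
    refine Set.mem_iUnion.mpr ⟨b - N, ?_⟩
    have : N + (b - N) = b := Nat.add_sub_cancel' (le_of_lt hNb)
    rw [this]
    exact hfmem b
end

section
/- Let a_1, a_2, a_3 be positive integers. Then there exists a Borel probability measure π on [0,1]³ concentrated on the set {(x_1, x_2, x_3) ∈ [0,1]³ : a_1 x_1 + a_2 x_2 + a_3 x_3 ∈ ℤ} (i.e. this set has full π-measure) such that each of the three pushforwards of π under the coordinate projections (x_1,x_2,x_3) ↦ (x_i, x_j), for {i,j} ∈ {{1,2},{1,3},{2,3}}, equals the Lebesgue measure restricted to the square [0,1]². -/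
open MeasureTheory Set

instance : Fact ((0:ℝ) < 1) := ⟨one_pos⟩

namespace Statement19Aux

/-- The canonical representative in `(0,1]` of a point of the unit circle. -/
noncomputable def Frep : AddCircle (1:ℝ) → ℝ := fun z => (AddCircle.equivIoc 1 0 z : ℝ)

lemma Frep_measurable : Measurable Frep :=
  measurable_subtype_coe.comp (AddCircle.measurableEquivIoc 1 0).measurable

lemma Frep_mem_Ioc (z : AddCircle (1:ℝ)) : Frep z ∈ Ioc (0:ℝ) 1 := by
  have h := (AddCircle.equivIoc 1 0 z).2
  simpa [Frep] using h

lemma Frep_mem_Icc (z : AddCircle (1:ℝ)) : Frep z ∈ Icc (0:ℝ) 1 :=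
  Ioc_subset_Icc_self (Frep_mem_Ioc z)

lemma coe_Frep (z : AddCircle (1:ℝ)) : ((Frep z : ℝ) : AddCircle (1:ℝ)) = z :=
  (AddCircle.equivIoc 1 0).symm_apply_apply z

lemma Frep_coe {x : ℝ} (hx : x ∈ Ioc (0:ℝ) 1) : Frep ((x : ℝ) : AddCircle (1:ℝ)) = x := by
  have hx' : x ∈ Ioc (0:ℝ) (0+1) := by rwa [zero_add]
  have : AddCircle.equivIoc 1 0 ((x : ℝ) : AddCircle (1:ℝ)) = ⟨x, hx'⟩ := by
    rw [Equiv.apply_eq_iff_eq_symm_apply]; rfl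
  simp [Frep, this]

lemma map_Frep_volume :
    Measure.map Frep (volume : Measure (AddCircle (1:ℝ)))
      = volume.restrict (Ioc (0:ℝ) 1) := by
  have hmk := AddCircle.measurePreserving_mk 1 0
  rw [zero_add] at hmk
  rw [← hmk.map_eq, Measure.map_map Frep_measurable AddCircle.measurable_mk']
  have : (Frep ∘ (QuotientAddGroup.mk : ℝ → AddCircle (1:ℝ)))
      =ᵐ[volume.restrict (Ioc (0:ℝ) 1)] id := by
    filter_upwards [ae_restrict_mem measurableSet_Ioc] with x hx
    exact Frep_coe hx
  rw [Measure.map_congr this, Measure.map_id]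

lemma Frep_measurePreserving :
    MeasurePreserving Frep (volume : Measure (AddCircle (1:ℝ)))
      (volume.restrict (Ioc (0:ℝ) 1)) :=
  ⟨Frep_measurable, map_Frep_volume⟩

instance : IsProbabilityMeasure (volume : Measure (AddCircle (1:ℝ))) :=
  ⟨by simp [AddCircle.measure_univ]⟩

lemma coe_natMul_Frep (n : ℕ) (z : AddCircle (1:ℝ)) :
    (((n : ℝ) * Frep z : ℝ) : AddCircle (1:ℝ)) = (n : ℤ) • z := by
  have h : ((n:ℝ) * Frep z) = (n:ℤ) • (Frep z) := by rw [zsmul_eq_mul]; push_cast; ring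
  rw [h, QuotientAddGroup.mk_zsmul, coe_Frep]

end Statement19Aux

open Statement19Aux

/-- for positive integers `a_1, a_2, a_3` there exists a Borel probability
measure `π` on `[0,1]³` giving full mass to the set
`{(x_1,x_2,x_3) : a_1x_1 + a_2x_2 + a_3x_3 ∈ ℤ}` whose three two-dimensional coordinate
projections all equal the Lebesgue measure restricted to the unit square. -/
theorem statement19 (a1 a2 a3 : ℕ) (h1 : 0 < a1) (h2 : 0 < a2) (h3 : 0 < a3) :
    ∃ π : Measure (ℝ × ℝ × ℝ), IsProbabilityMeasure π ∧
      π (Set.Icc (0:ℝ) 1 ×ˢ (Set.Icc (0:ℝ) 1 ×ˢ Set.Icc (0:ℝ) 1)) = 1 ∧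
      π {p : ℝ × ℝ × ℝ | ∃ z : ℤ,
          (a1 : ℝ) * p.1 + (a2 : ℝ) * p.2.1 + (a3 : ℝ) * p.2.2 = (z : ℝ)} = 1 ∧
      Measure.map (fun p : ℝ × ℝ × ℝ => (p.1, p.2.1)) π =
        (volume.restrict (Set.Icc (0:ℝ) 1)).prod (volume.restrict (Set.Icc (0:ℝ) 1)) ∧
      Measure.map (fun p : ℝ × ℝ × ℝ => (p.1, p.2.2)) π =
        (volume.restrict (Set.Icc (0:ℝ) 1)).prod (volume.restrict (Set.Icc (0:ℝ) 1)) ∧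
      Measure.map (fun p : ℝ × ℝ × ℝ => p.2) π =
        (volume.restrict (Set.Icc (0:ℝ) 1)).prod (volume.restrict (Set.Icc (0:ℝ) 1)) := by
  classical
  set C := AddCircle (1:ℝ)
  set μ : Measure C := volume with hμ
  set η : Measure (C × C) := μ.prod μ with hη
  haveI : IsProbabilityMeasure η := by infer_instance
  -- integer coefficients
  have ha1 : ((a1 : ℤ)) ≠ 0 := by exact_mod_cast h1.ne'
  have ha2 : ((a2 : ℤ)) ≠ 0 := by exact_mod_cast h2.ne'
  have ha3 : ((a3 : ℤ)) ≠ 0 := by exact_mod_cast h3.ne'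
  have hna1 : (-(a1 : ℤ)) ≠ 0 := neg_ne_zero.mpr ha1
  have hna2 : (-(a2 : ℤ)) ≠ 0 := neg_ne_zero.mpr ha2
  -- the three circle-valued coordinates
  set c1 : C × C → C := fun w => (a3 : ℤ) • w.1 with hc1
  set c2 : C × C → C := fun w => (a3 : ℤ) • w.2 with hc2
  set c3 : C × C → C := fun w => (-(a1 : ℤ)) • w.1 + (-(a2 : ℤ)) • w.2 with hc3
  have hcont1 : Continuous c1 := (continuous_zsmul _).comp continuous_fst
  have hcont2 : Continuous c2 := (continuous_zsmul _).comp continuous_snd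
  have hcont3 : Continuous c3 :=
    ((continuous_zsmul _).comp continuous_fst).add ((continuous_zsmul _).comp continuous_snd)
  -- the map into ℝ³
  set G : C × C → ℝ × ℝ × ℝ := fun w => (Frep (c1 w), Frep (c2 w), Frep (c3 w)) with hG
  have hGmeas : Measurable G :=
    (Frep_measurable.comp hcont1.measurable).prodMk
      ((Frep_measurable.comp hcont2.measurable).prodMk
        (Frep_measurable.comp hcont3.measurable))
  refine ⟨Measure.map G η, Measure.isProbabilityMeasure_map hGmeas.aemeasurable, ?_, ?_, ?_, ?_, ?_⟩
  · -- full mass on the unit cube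
    have hsub : Set.univ ⊆ G ⁻¹' (Set.Icc (0:ℝ) 1 ×ˢ (Set.Icc (0:ℝ) 1 ×ˢ Set.Icc (0:ℝ) 1)) := by
      intro w _
      exact ⟨Frep_mem_Icc _, Frep_mem_Icc _, Frep_mem_Icc _⟩
    have h1' := Measure.le_map_apply (μ := η) hGmeas.aemeasurable
      (Set.Icc (0:ℝ) 1 ×ˢ (Set.Icc (0:ℝ) 1 ×ˢ Set.Icc (0:ℝ) 1))
    have h2' : η (G ⁻¹' (Set.Icc (0:ℝ) 1 ×ˢ (Set.Icc (0:ℝ) 1 ×ˢ Set.Icc (0:ℝ) 1))) = 1 := by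
      rw [Set.eq_univ_of_univ_subset hsub]
      exact measure_univ
    refine le_antisymm prob_le_one ?_
    rw [← h2']; exact h1'
  · -- full mass on the integrality set
    set S : Set (ℝ × ℝ × ℝ) := {p : ℝ × ℝ × ℝ | ∃ z : ℤ,
        (a1 : ℝ) * p.1 + (a2 : ℝ) * p.2.1 + (a3 : ℝ) * p.2.2 = (z : ℝ)} with hS
    have hsub : Set.univ ⊆ G ⁻¹' S := by
      intro w _
      simp only [Set.mem_preimage, hS, Set.mem_setOf_eq]
      -- show the sum maps to 0 on the circle
      have key : (((a1 : ℝ) * Frep (c1 w) + (a2 : ℝ) * Frep (c2 w) + (a3 : ℝ) * Frep (c3 w) : ℝ)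
          : C) = 0 := by
        rw [QuotientAddGroup.mk_add, QuotientAddGroup.mk_add,
          coe_natMul_Frep, coe_natMul_Frep, coe_natMul_Frep]
        simp only [hc1, hc2, hc3]
        module
      rcases (AddCircle.coe_eq_zero_iff (1:ℝ)).mp key with ⟨n, hn⟩
      exact ⟨n, by rw [← hn, zsmul_eq_mul, mul_one]⟩
    have h1' := Measure.le_map_apply (μ := η) hGmeas.aemeasurable S
    have h2' : η (G ⁻¹' S) = 1 := by
      rw [Set.eq_univ_of_univ_subset hsub]; exact measure_univ
    refine le_antisymm prob_le_one ?_
    rw [← h2']; exact h1'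
  all_goals {
    -- marginals
    have hIccIoc : (volume.restrict (Set.Icc (0:ℝ) 1)) = volume.restrict (Ioc (0:ℝ) 1) :=
      (Measure.restrict_congr_set Ioc_ae_eq_Icc).symm
    rw [hIccIoc]
    set ρ : Measure ℝ := volume.restrict (Ioc (0:ℝ) 1) with hρ
    -- measure preserving facts on the circle
    have mz3 : MeasurePreserving (fun z : C => (a3 : ℤ) • z) μ μ :=
      Measure.measurePreserving_zsmul μ ha3
    first
    | -- marginal (x1, x2)
      (rw [Measure.map_map (measurable_fst.prodMk (measurable_fst.comp measurable_snd) : Measurable fun p : ℝ × ℝ × ℝ => (p.1, p.2.1)) hGmeas]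
       have mp : MeasurePreserving (fun w : C × C => (c1 w, c2 w)) η (μ.prod μ) := mz3.prod mz3
       have := (Frep_measurePreserving.prod Frep_measurePreserving).comp mp
       exact this.map_eq)
    | -- marginal (x1, x3)
      (rw [Measure.map_map (measurable_fst.prodMk (measurable_snd.comp measurable_snd) : Measurable fun p : ℝ × ℝ × ℝ => (p.1, p.2.2)) hGmeas]
       have mp : MeasurePreserving (fun w : C × C => (c1 w, c3 w)) η (μ.prod μ) := by
         refine MeasurePreserving.skew_product
           (g := fun u v : C => (-(a1 : ℤ)) • u + (-(a2 : ℤ)) • v) mz3 ?_ ?_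
         · exact hcont3.measurable
         · refine Filter.Eventually.of_forall (fun u => ?_)
           show Measure.map (fun v : C => (-(a1 : ℤ)) • u + (-(a2 : ℤ)) • v) μ = μ
           have : (fun v : C => (-(a1 : ℤ)) • u + (-(a2 : ℤ)) • v)
               = (fun v : C => (-(a1 : ℤ)) • u + v) ∘ (fun v : C => (-(a2 : ℤ)) • v) := rfl
           rw [this, ← Measure.map_map (measurable_const_add _) (continuous_zsmul _).measurable]
           rw [(Measure.measurePreserving_zsmul μ hna2).map_eq,
             (measurePreserving_add_left μ _).map_eq]
       have := (Frep_measurePreserving.prod Frep_measurePreserving).comp mp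
       exact this.map_eq)
    | -- marginal (x2, x3)
      (rw [Measure.map_map (measurable_snd : Measurable fun p : ℝ × ℝ × ℝ => p.2) hGmeas]
       have mpsk : MeasurePreserving
           (fun q : C × C => ((a3 : ℤ) • q.1, (-(a2 : ℤ)) • q.1 + (-(a1 : ℤ)) • q.2))
           η (μ.prod μ) := by
         refine MeasurePreserving.skew_product
           (g := fun u v : C => (-(a2 : ℤ)) • u + (-(a1 : ℤ)) • v) mz3 ?_ ?_
         · exact (((continuous_zsmul _).comp continuous_fst).add
             ((continuous_zsmul _).comp continuous_snd)).measurable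
         · refine Filter.Eventually.of_forall (fun v => ?_)
           show Measure.map (fun u : C => (-(a2 : ℤ)) • v + (-(a1 : ℤ)) • u) μ = μ
           have : (fun u : C => (-(a2 : ℤ)) • v + (-(a1 : ℤ)) • u)
               = (fun u : C => (-(a2 : ℤ)) • v + u) ∘ (fun u : C => (-(a1 : ℤ)) • u) := rfl
           rw [this, ← Measure.map_map (measurable_const_add _) (continuous_zsmul _).measurable]
           rw [(Measure.measurePreserving_zsmul μ hna1).map_eq,
             (measurePreserving_add_left μ _).map_eq]
       have mp : MeasurePreserving (fun w : C × C => (c2 w, c3 w)) η (μ.prod μ) := by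
         have hsw : MeasurePreserving (Prod.swap : C × C → C × C) η η :=
           Measure.measurePreserving_swap
         have := mpsk.comp hsw
         convert this using 1
         funext w
         simp only [Function.comp_apply, Prod.swap, hc2, hc3]
         refine Prod.ext rfl ?_
         simp [add_comm]
       have := (Frep_measurePreserving.prod Frep_measurePreserving).comp mp
       exact this.map_eq)
  }
end
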